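/- Let A → B be a flat ring homomorphism with B ⊗_A B ≅ B via multiplication. If I ⊆ A is a radical ideal, then I·B is a radical ideal of B. -/

import Mathlib

open TensorProduct LinearMap

set_option maxHeartbeats 1000000

/-- Auxiliary: if `z ∈ I • ⊤` in `M ⊗ Q`, then `z` dies in `(M ⧸ I•⊤) ⊗ Q`. -/
theorem map_isRadical_kill {A M Q : Type*} [CommRing A] [AddCommGroup M] [Module A M]
    [AddCommGroup Q] [Module A Q] (I : Ideal A) {z : M ⊗[A] Q}
    (hz : z ∈ I • (⊤ : Submodule A (M ⊗[A] Q))) :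
    (I • (⊤ : Submodule A M)).mkQ.rTensor Q z = 0 := by
  refine Submodule.smul_induction_on hz ?_ ?_
  · intro a haI w _
    induction w using TensorProduct.induction_on with
    | zero => simp
    | tmul x y =>
      rw [smul_tmul', rTensor_tmul]
      have hx : (I • (⊤ : Submodule A M)).mkQ (a • x) = 0 :=
        (Submodule.Quotient.mk_eq_zero _).mpr (Submodule.smul_mem_smul haI trivial)
      rw [hx, zero_tmul]
    | add u v hu hv =>
      rw [smul_add, map_add, hu trivial, hv trivial, add_zero]
  · intro u v hu hv
    rw [map_add, hu, hv, add_zero]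

/-- Auxiliary: if `v ∈ I • ⊤` in `Q`, then `m ⊗ v ∈ I • ⊤` in `M ⊗ Q`. -/
theorem map_isRadical_tmul_mem {A M Q : Type*} [CommRing A] [AddCommGroup M] [Module A M]
    [AddCommGroup Q] [Module A Q] (I : Ideal A) (m : M) {v : Q}
    (hv : v ∈ I • (⊤ : Submodule A Q)) :
    m ⊗ₜ[A] v ∈ I • (⊤ : Submodule A (M ⊗[A] Q)) := by
  refine Submodule.smul_induction_on hv ?_ ?_
  · intro a haI u _
    rw [tmul_smul]
    exact Submodule.smul_mem_smul haI trivial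
  · intro u v hu hv
    rw [tmul_add]
    exact Submodule.add_mem _ hu hv

/-- Auxiliary: coordinates of elements of `I • ⊤` in `ι →₀ A` lie in `I`. -/
theorem map_isRadical_coord {A : Type*} [CommRing A] {ι : Type*} (I : Ideal A)
    {v : ι →₀ A} (hv : v ∈ I • (⊤ : Submodule A (ι →₀ A))) (i : ι) : v i ∈ I := by
  refine Submodule.smul_induction_on hv ?_ ?_
  · intro a haI w _
    rw [Finsupp.smul_apply, smul_eq_mul]
    exact Ideal.mul_mem_right _ _ haI
  · intro u v hu hv
    rw [Finsupp.add_apply]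
    exact Ideal.add_mem _ hu hv

/-- Auxiliary: the key "square" case. If `b * b ∈ I·B` then `b ∈ I·B`. -/
theorem map_isRadical_aux {A B : Type*} [CommRing A] [CommRing B] [Algebra A B]
    (hflat : Module.Flat A B)
    (hmul : Function.Bijective (LinearMap.mul' A B))
    (I : Ideal A) (hI : I.IsRadical) (b : B)
    (hb : b * b ∈ Ideal.map (algebraMap A B) I) :
    b ∈ Ideal.map (algebraMap A B) I := by
  classical
  set N : Submodule A B := I • ⊤ with hN
  have hNJ : ∀ z : B, z ∈ N ↔ z ∈ Ideal.map (algebraMap A B) I := by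
    intro z
    rw [hN, Ideal.smul_top_eq_map, Submodule.restrictScalars_mem]
  rw [← hNJ]
  -- Step 0 : `b ⊗ b ∈ I • ⊤` in `B ⊗ B`.
  have h0 : (b ⊗ₜ[A] b : B ⊗[A] B) ∈ I • (⊤ : Submodule A (B ⊗[A] B)) := by
    have hmem : b * b ∈ N := (hNJ _).mpr hb
    have hmap : Submodule.map (LinearMap.mul' A B) (I • (⊤ : Submodule A (B ⊗[A] B))) = N := by
      rw [Submodule.map_smul'', Submodule.map_top, LinearMap.range_eq_top.mpr hmul.surjective]
    rw [← hmap] at hmem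
    obtain ⟨z, hz, hzeq⟩ := hmem
    obtain rfl : z = b ⊗ₜ[A] b := hmul.injective (by simpa using hzeq)
    exact hz
  -- Step 1 : `b ∈ K • ⊤` where `K = {a : A | a • b ∈ N}`.
  set g : A →ₗ[A] B ⧸ N := N.mkQ ∘ₗ LinearMap.toSpanSingleton A B b with hg
  set K : Ideal A := LinearMap.ker g with hK
  have hKmem : ∀ a : A, a ∈ K ↔ a • b ∈ N := by
    intro a
    rw [hK, LinearMap.mem_ker, hg, LinearMap.comp_apply, LinearMap.toSpanSingleton_apply,
      Submodule.mkQ_apply, Submodule.Quotient.mk_eq_zero]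
  set gbar : (A ⧸ K) →ₗ[A] B ⧸ N := Submodule.liftQ K g le_rfl with hgbar
  have hginj : Function.Injective gbar := by
    rw [← LinearMap.ker_eq_bot, hgbar]
    exact Submodule.ker_liftQ_eq_bot _ _ _ le_rfl
  have hrinj : Function.Injective (gbar.rTensor B) :=
    Module.Flat.rTensor_preserves_injective_linearMap gbar hginj
  have hξ : ((Submodule.Quotient.mk (1 : A) : A ⧸ K) ⊗ₜ[A] b : (A ⧸ K) ⊗[A] B) = 0 := by
    apply hrinj
    rw [map_zero, rTensor_tmul]
    have h1 : gbar (Submodule.Quotient.mk (1 : A)) = N.mkQ b := by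
      rw [hgbar, Submodule.liftQ_apply, hg]
      simp
    rw [h1]
    have h2 : (N.mkQ b) ⊗ₜ[A] b = N.mkQ.rTensor B (b ⊗ₜ[A] b) := by
      rw [rTensor_tmul]
    rw [h2, hN]
    exact map_isRadical_kill I h0
  have hbK : b ∈ K • (⊤ : Submodule A B) := by
    have h3 := congrArg (TensorProduct.quotTensorEquivQuotSMul B K) hξ
    rw [map_zero] at h3
    have h4 : TensorProduct.quotTensorEquivQuotSMul B K
        ((Submodule.Quotient.mk (1 : A) : A ⧸ K) ⊗ₜ[A] b) =
        Submodule.Quotient.mk ((1 : A) • b) := by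
      rw [Ideal.Quotient.mk_eq_mk]
      exact TensorProduct.quotTensorEquivQuotSMul_mk_tmul K (1 : A) b
    rw [h4, one_smul, Submodule.Quotient.mk_eq_zero] at h3
    exact h3
  -- Step 2 : representation `b = ∑ c j • j` with `c j ∈ K`.
  have htop : (⊤ : Submodule A B) = Submodule.span A (Set.range (fun z : B => z)) := by
    rw [Set.range_id', Submodule.span_univ]
  rw [htop] at hbK
  obtain ⟨c, hc, hsum⟩ :=
    (Submodule.mem_ideal_smul_span_iff_exists_sum K (fun z : B => z) b).mp hbK
  -- Step 3 : the final flatness argument.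
  set K₀ : Ideal A := Ideal.span (Set.range fun j : ↥c.support => c j) with hK₀
  have hmemK₀ : ∀ j : ↥c.support, c j ∈ K₀ := fun j => Ideal.subset_span ⟨j, rfl⟩
  set θ : A →ₗ[A] (↥c.support →₀ A) :=
    ∑ i : ↥c.support, Finsupp.lsingle i ∘ₗ LinearMap.lsmul A A (c i) with hθ
  have hθapply : ∀ (k : A) (i : ↥c.support), θ k i = c i * k := by
    intro k i
    rw [hθ]
    simp only [LinearMap.sum_apply, LinearMap.coe_comp, Function.comp_apply,
      Finsupp.lsingle_apply, LinearMap.lsmul_apply, Finsupp.finset_sum_apply]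
    rw [Finset.sum_eq_single i]
    · rw [Finsupp.single_eq_same, smul_eq_mul]
    · intro j _ hji
      exact Finsupp.single_eq_of_ne' hji
    · intro h; exact absurd (Finset.mem_univ i) h
  set NF : Submodule A (↥c.support →₀ A) := I • ⊤ with hNF
  set ψ : ↥K₀ →ₗ[A] ((↥c.support →₀ A) ⧸ NF) :=
    NF.mkQ ∘ₗ θ ∘ₗ (Submodule.subtype (K₀ : Submodule A A)) with hψ
  -- kernel of ψ lands in I
  have hLI : ∀ k : ↥K₀, k ∈ LinearMap.ker ψ → (k : A) ∈ I := by
    intro k hk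
    have hθk : θ (k : A) ∈ NF := by
      have h5 : NF.mkQ (θ (k : A)) = 0 := hk
      rwa [Submodule.mkQ_apply, Submodule.Quotient.mk_eq_zero] at h5
    have hki : ∀ i : ↥c.support, c i * (k : A) ∈ I := by
      intro i
      have := map_isRadical_coord I (hNF ▸ hθk) i
      rwa [hθapply] at this
    have hkK₀ : (k : A) ∈ Submodule.span A (Set.range fun j : ↥c.support => c j) := k.2
    obtain ⟨d, hd⟩ := (Submodule.mem_span_range_iff_exists_fun A).mp hkK₀
    have hsq : (k : A) ^ 2 ∈ I := by
      have heq : (k : A) ^ 2 = ∑ i : ↥c.support, d i • (c i * (k : A)) := by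
        rw [pow_two]
        calc (k : A) * (k : A) = (∑ i : ↥c.support, d i • c i) * (k : A) := by rw [hd]
        _ = ∑ i : ↥c.support, d i • (c i * (k : A)) := by
            rw [Finset.sum_mul]
            exact Finset.sum_congr rfl fun i _ => by rw [smul_mul_assoc]
      rw [heq]
      exact Submodule.sum_mem _ fun i _ => Ideal.mul_mem_left _ _ (hki i)
    exact hI ⟨2, hsq⟩
  -- the element x in K₀ ⊗ B
  set x : ↥K₀ ⊗[A] B := ∑ j : ↥c.support, (⟨c j, hmemK₀ j⟩ : ↥K₀) ⊗ₜ[A] (j : B) with hx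
  -- ψ.rTensor B kills x
  have hsumb : ∀ i : ↥c.support, (∑ j : ↥c.support, (c i * c j) • (j : B)) = c i • b := by
    intro i
    rw [Finset.sum_coe_sort c.support (fun z : B => (c i * c z) • z), ← hsum, Finsupp.sum,
      Finset.smul_sum]
    exact Finset.sum_congr rfl fun j _ => mul_smul _ _ _
  have hψx : ψ.rTensor B x = 0 := by
    have hcomp : ψ = NF.mkQ ∘ₗ (θ ∘ₗ (Submodule.subtype (K₀ : Submodule A A))) := by
      rw [hψ]
    rw [hcomp, LinearMap.rTensor_comp, LinearMap.comp_apply]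
    have hy : (θ ∘ₗ (Submodule.subtype (K₀ : Submodule A A))).rTensor B x =
        ∑ i : ↥c.support, (Finsupp.single i (1 : A)) ⊗ₜ[A] (c i • b) := by
      rw [hx, map_sum]
      have h6 : ∀ j : ↥c.support, (θ ∘ₗ (Submodule.subtype (K₀ : Submodule A A))).rTensor B
          ((⟨c j, hmemK₀ j⟩ : ↥K₀) ⊗ₜ[A] (j : B)) = θ (c j) ⊗ₜ[A] (j : B) := fun j => by
        rw [rTensor_tmul]; rfl
      rw [Finset.sum_congr rfl fun j _ => h6 j]
      have h7 : ∀ j : ↥c.support, θ (c j) ⊗ₜ[A] (j : B) =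
          ∑ i : ↥c.support, (Finsupp.single i (1 : A)) ⊗ₜ[A] ((c i * c j) • (j : B)) := by
        intro j
        have hθc : θ (c j) = ∑ i : ↥c.support, (c i * c j) • Finsupp.single i (1 : A) := by
          ext i'
          rw [hθapply, Finsupp.finset_sum_apply]
          rw [Finset.sum_eq_single i']
          · rw [Finsupp.smul_apply, Finsupp.single_eq_same, smul_eq_mul, mul_one]
          · intro j' _ hji
            rw [Finsupp.smul_apply, Finsupp.single_eq_of_ne' hji, smul_zero]
          · intro h; exact absurd (Finset.mem_univ i') h
        rw [hθc, TensorProduct.sum_tmul]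
        exact Finset.sum_congr rfl fun i _ => TensorProduct.smul_tmul _ _ _
      rw [Finset.sum_congr rfl fun j _ => h7 j, Finset.sum_comm]
      exact Finset.sum_congr rfl fun i _ => by rw [← TensorProduct.tmul_sum, hsumb]
    rw [hy, hNF]
    apply map_isRadical_kill I
    apply Submodule.sum_mem
    intro i _
    exact map_isRadical_tmul_mem I _ ((hKmem _).mp (hc i))
  -- deduce x comes from (ker ψ) ⊗ B
  set L : Submodule A ↥K₀ := LinearMap.ker ψ with hL
  set ψbar : (↥K₀ ⧸ L) →ₗ[A] ((↥c.support →₀ A) ⧸ NF) := Submodule.liftQ L ψ le_rfl with hψbar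
  have hψbarinj : Function.Injective ψbar := by
    rw [← LinearMap.ker_eq_bot, hψbar]
    exact Submodule.ker_liftQ_eq_bot _ _ _ le_rfl
  have hmkx : (L.mkQ).rTensor B x = 0 := by
    apply Module.Flat.rTensor_preserves_injective_linearMap ψbar hψbarinj
    rw [map_zero]
    have h9 : ψbar ∘ₗ L.mkQ = ψ := Submodule.liftQ_mkQ _ _ _
    calc ψbar.rTensor B ((L.mkQ).rTensor B x) = (ψbar ∘ₗ L.mkQ).rTensor B x := by
          rw [LinearMap.rTensor_comp, LinearMap.comp_apply]
    _ = 0 := by rw [h9, hψx]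
  have hexact : Function.Exact (L.subtype.rTensor B) ((L.mkQ).rTensor B) :=
    rTensor_exact B (LinearMap.exact_subtype_mkQ L) (Submodule.mkQ_surjective L)
  obtain ⟨w, hw⟩ := (hexact x).mp hmkx
  -- the multiplication map μ : K₀ ⊗ B → B
  set μ : ↥K₀ ⊗[A] B →ₗ[A] B :=
    (TensorProduct.lid A B).toLinearMap ∘ₗ ((Submodule.subtype (K₀ : Submodule A A)).rTensor B)
    with hμ
  have hμx : μ x = b := by
    rw [hμ, hx, LinearMap.comp_apply, map_sum]
    have h10 : ∀ j : ↥c.support, (Submodule.subtype (K₀ : Submodule A A)).rTensor B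
        ((⟨c j, hmemK₀ j⟩ : ↥K₀) ⊗ₜ[A] (j : B)) = (c j) ⊗ₜ[A] (j : B) := fun j => by
      rw [rTensor_tmul]; rfl
    rw [Finset.sum_congr rfl fun j _ => h10 j, map_sum]
    simp only [LinearEquiv.coe_coe, TensorProduct.lid_tmul]
    rw [Finset.sum_coe_sort c.support (fun z : B => c z • z), ← hsum, Finsupp.sum]
  have hμw : ∀ w : ↥L ⊗[A] B, μ (L.subtype.rTensor B w) ∈ N := by
    intro w
    induction w using TensorProduct.induction_on with
    | zero => simp [N]
    | tmul p u =>
      rw [rTensor_tmul, hμ, LinearMap.comp_apply, rTensor_tmul]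
      simp only [Submodule.coe_subtype, LinearEquiv.coe_coe, TensorProduct.lid_tmul]
      exact Submodule.smul_mem_smul (hLI _ p.2) trivial
    | add u v hu hv =>
      rw [map_add, map_add]
      exact Submodule.add_mem _ hu hv
  rw [← hμx, ← hw]
  exact hμw w

/-- If `A → B` is flat with `B ⊗[A] B ≅ B` via multiplication, and `I ⊆ A` is a
radical ideal, then `I·B` is a radical ideal of `B`. -/
theorem map_isRadical {A B : Type*} [CommRing A] [CommRing B] [Algebra A B]
    (hflat : Module.Flat A B)
    (hmul : Function.Bijective (LinearMap.mul' A B))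
    (I : Ideal A) (hI : I.IsRadical) :
    (Ideal.map (algebraMap A B) I).IsRadical := by
  rw [Ideal.isRadical_iff_pow_one_lt 2 one_lt_two]
  intro b hb
  exact map_isRadical_aux hflat hmul I hI b (by rwa [← pow_two])
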